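/- arXiv:1006.1741 — 2 statements merged into one kernel-verified Lean document; each statement's English description precedes it below -/
import Mathlib

section
/- Each function u_t(z) = t z² + (1−t) z²/|z| on the closed unit disk (with u_t(0)=0) satisfies the absolutely-minimizing-Lipschitz property: for every open V ⊆ B₁(0), Lip(u_t, V) = Lip(u_t, ∂V). In particular, AML extensions of vector-valued boundary data are not unique: all u_t, t ∈ [0,1], agree on ∂B₁(0) but are distinct AML extensions. -/
/-- The Lipschitz constant of `f` on `s`: `Lip(f,s) = sup_{x ≠ y ∈ s} ‖f x - f y‖/‖x - y‖`. -/
noncomputable def LipOn (f : ℂ → ℂ) (s : Set ℂ) : ℝ :=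
  sSup {c : ℝ | ∃ x ∈ s, ∃ y ∈ s, x ≠ y ∧ c = ‖f x - f y‖ / ‖x - y‖}

/-- The local Lipschitz constant `L f(x) = inf_{r>0} Lip(f, U ∩ B_r(x))`. -/
noncomputable def Lloc (U : Set ℂ) (f : ℂ → ℂ) (x : ℂ) : ℝ :=
  sInf {c : ℝ | ∃ r > (0:ℝ), c = LipOn f (U ∩ Metric.ball x r)}

/-- `v` is tighter than `u` on `U`. -/
def TighterC (U : Set ℂ) (v u : ℂ → ℂ) : Prop :=
  (∀ x ∈ frontier U, v x = u x) ∧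
    sSup {c : ℝ | ∃ x ∈ U, Lloc U u x = c ∧ Lloc U v x < Lloc U u x} >
      sSup {c : ℝ | ∃ x ∈ U, Lloc U v x = c ∧ Lloc U u x < Lloc U v x}

/-- The family `u_t(z) = t z² + (1-t) z²/|z|`, with `u_t(0) = 0`. -/
noncomputable def ut (t : ℝ) (z : ℂ) : ℂ :=
  if z = 0 then 0 else (t : ℂ) * z^2 + ((1 - t : ℝ) : ℂ) * z^2 / (‖z‖ : ℂ)

open Complex Set Metric Real

noncomputable def phir (t s : ℝ) : ℝ := t*s^2 + (1-t)*s

-- exp facts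
lemma norm_exp_I' (θ : ℝ) : ‖Complex.exp ((θ:ℂ) * Complex.I)‖ = 1 := by
  simp [Complex.norm_exp_ofReal_mul_I]

lemma exp_I_ne_one (θ : ℝ) (h0 : θ ≠ 0) (h1 : |θ| ≤ 1) :
    Complex.exp ((θ:ℂ) * Complex.I) ≠ 1 := by
  intro h
  obtain ⟨n, hn⟩ := Complex.exp_eq_one_iff.1 h
  have hθ : θ = (n:ℝ) * (2*π) := by
    have hIne : (Complex.I : ℂ) ≠ 0 := Complex.I_ne_zero
    have h5 : (θ:ℂ) * Complex.I = (((n:ℝ) * (2*π) : ℝ):ℂ) * Complex.I := by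
      rw [hn]; push_cast; ring
    have h6 := mul_right_cancel₀ hIne h5
    exact_mod_cast h6
  have hπ : (3:ℝ) < π := Real.pi_gt_three
  rcases lt_trichotomy (n:ℝ) 0 with hl | hl | hl
  · have hn0 : n < 0 := by exact_mod_cast hl
    have hn1' : n ≤ -1 := by omega
    have hn1 : (n:ℝ) ≤ -1 := by exact_mod_cast hn1'
    have : θ ≤ -(2*π) := by nlinarith
    have := abs_le.1 h1
    nlinarith [this.1]
  · apply h0; rw [hθ, hl, zero_mul]
  · have hn0 : 0 < n := by exact_mod_cast hl
    have hn1' : 1 ≤ n := by omega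
    have hn1 : (1:ℝ) ≤ n := by exact_mod_cast hn1'
    have : 2*π ≤ θ := by nlinarith
    have := abs_le.1 h1
    nlinarith [this.2]

lemma norm_one_sub_exp_le (θ : ℝ) (h : 0 ≤ θ) :
    ‖1 - Complex.exp ((θ:ℂ) * Complex.I)‖ ≤ θ := by
  have h1 : Complex.exp ((θ:ℂ) * Complex.I) = Complex.cos θ + Complex.sin θ * Complex.I :=
    Complex.exp_mul_I _
  have h2 : (1 : ℂ) - Complex.exp ((θ:ℂ) * Complex.I)
      = Complex.ofReal (1 - Real.cos θ) + Complex.ofReal (-Real.sin θ) * Complex.I := by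
    rw [h1]; push_cast; ring
  rw [h2, Complex.norm_add_mul_I]
  rw [show ((1 - Real.cos θ)^2 + (-Real.sin θ)^2) = (1 - Real.cos θ)^2 + (Real.sin θ)^2 by ring]
  have key : (1 - Real.cos θ)^2 + (Real.sin θ)^2 ≤ θ^2 := by
    have hs : (Real.sin (θ/2))^2 ≤ (θ/2)^2 := by
      have h3 := Real.abs_sin_le_abs (x := θ/2)
      nlinarith [abs_nonneg (Real.sin (θ/2)), _root_.sq_abs (Real.sin (θ/2)), _root_.sq_abs (θ/2)]
    have hc : Real.cos θ = 1 - 2 * (Real.sin (θ/2))^2 := by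
      have h4 := Real.cos_two_mul (θ/2)
      have hpy := Real.sin_sq_add_cos_sq (θ/2)
      rw [show 2*(θ/2) = θ by ring] at h4
      nlinarith
    nlinarith [Real.sin_sq_add_cos_sq θ]
  calc Real.sqrt ((1 - Real.cos θ)^2 + (Real.sin θ)^2) ≤ Real.sqrt (θ^2) :=
        Real.sqrt_le_sqrt key
    _ = θ := by rw [Real.sqrt_sq h]

lemma norm_one_sub_exp_le' (θ : ℝ) : ‖1 - Complex.exp ((θ:ℂ) * Complex.I)‖ ≤ |θ| := by
  rcases le_or_gt 0 θ with h | h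
  · rw [_root_.abs_of_nonneg h]; exact norm_one_sub_exp_le θ h
  · have hconj : (starRingEnd ℂ) (1 - Complex.exp (((-θ:ℝ):ℂ) * Complex.I))
        = 1 - Complex.exp ((θ:ℂ) * Complex.I) := by
      rw [map_sub, map_one, ← Complex.exp_conj]
      congr 2
      simp [Complex.conj_I, Complex.conj_ofReal]
      try ring
    rw [← hconj, RCLike.norm_conj, _root_.abs_of_neg h]
    exact norm_one_sub_exp_le (-θ) (by linarith)
lemma ut_zero (t : ℝ) : ut t 0 = 0 := by simp [ut]

lemma ut_polar (t s : ℝ) (w : ℂ) (hs : 0 < s) (hw : ‖w‖ = 1) :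
    ut t ((s:ℂ)*w) = ((phir t s : ℝ):ℂ) * w^2 := by
  have hw0 : w ≠ 0 := by intro h; simp [h] at hw
  have hz : (s:ℂ)*w ≠ 0 := by
    apply mul_ne_zero _ hw0; exact_mod_cast hs.ne'
  have hnorm : ‖(s:ℂ)*w‖ = s := by
    rw [norm_mul, hw, Complex.norm_real, Real.norm_of_nonneg hs.le, mul_one]
  rw [ut, if_neg hz, hnorm, phir]
  have hs0 : (s:ℂ) ≠ 0 := by exact_mod_cast hs.ne'
  field_simp
  push_cast; ring

lemma phir_nonneg (t s : ℝ) (ht0 : 0 ≤ t) (ht1 : t ≤ 1) (hs : 0 ≤ s) : 0 ≤ phir t s := by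
  rw [phir]; nlinarith

lemma norm_ut_eq (t : ℝ) (ht0 : 0 ≤ t) (ht1 : t ≤ 1) (y : ℂ) (hy : y ≠ 0) :
    ‖ut t y‖ = phir t ‖y‖ := by
  have hb : 0 < ‖y‖ := norm_pos_iff.2 hy
  have habs : ‖y‖ ≠ 0 := by
    exact hb.ne'
  have hw : ‖(‖y‖:ℂ)⁻¹ * y‖ = 1 := by
    rw [norm_mul, norm_inv, Complex.norm_real, Real.norm_of_nonneg hb.le]
    field_simp
  have hyy : y = ((‖y‖:ℝ):ℂ) * ((‖y‖:ℂ)⁻¹ * y) := by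
    rw [← mul_assoc, mul_inv_cancel₀ (by exact_mod_cast hb.ne'), one_mul]
  calc ‖ut t y‖ = ‖ut t (((‖y‖:ℝ):ℂ) * ((‖y‖:ℂ)⁻¹ * y))‖ := by rw [← hyy]
    _ = ‖((phir t ‖y‖ : ℝ):ℂ) * ((‖y‖:ℂ)⁻¹ * y)^2‖ := by rw [ut_polar t ‖y‖ _ hb hw]
    _ = phir t ‖y‖ := by
        rw [norm_mul, norm_pow, hw, Complex.norm_real,
          Real.norm_of_nonneg (phir_nonneg t _ ht0 ht1 hb.le)]
        ring

lemma keyreal (t a b p K φa φb m : ℝ) (ht0 : 0 ≤ t) (ht1 : t ≤ 1)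
    (ha : 0 < a) (hb : 0 < b) (hma : a ≤ m) (hmb : b ≤ m)
    (hφa : φa = t*a^2 + (1-t)*a) (hφb : φb = t*b^2 + (1-t)*b)
    (hK : K = 2*t*m + 2*(1-t))
    (hp1 : p ≤ a*b) (hp2 : -(a*b) ≤ p) :
    φa^2*(a*b)^2 + φb^2*(a*b)^2 - 2*φa*φb*(2*p^2 - (a*b)^2)
      ≤ K^2*(a^2+b^2-2*p)*(a*b)^2 := by
  have hφa0 : 0 ≤ φa := by rw [hφa]; nlinarith
  have hφb0 : 0 ≤ φb := by rw [hφb]; nlinarith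
  have h1 : 2*φa ≤ K*a := by
    rw [hφa, hK]
    nlinarith [mul_nonneg (mul_nonneg ht0 (sub_nonneg.2 hma)) ha.le]
  have h2 : 2*φb ≤ K*b := by
    rw [hφb, hK]
    nlinarith [mul_nonneg (mul_nonneg ht0 (sub_nonneg.2 hmb)) hb.le]
  have hK0 : 0 ≤ K := by rw [hK]; nlinarith
  have h12 : 4*(φa*φb) ≤ K^2*(a*b) := by
    nlinarith [mul_le_mul h1 h2 (by linarith) (by nlinarith)]
  have h3 : (φa-φb)^2 ≤ K^2*(a-b)^2 := by
    have hf : φa - φb = (a-b)*(t*(a+b)+(1-t)) := by rw [hφa, hφb]; ring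
    have hf0 : 0 ≤ t*(a+b)+(1-t) := by nlinarith
    have hfK : t*(a+b)+(1-t) ≤ K := by rw [hK]; nlinarith
    have hsq : (t*(a+b)+(1-t))^2 ≤ K^2 := by nlinarith
    calc (φa-φb)^2 = (a-b)^2*(t*(a+b)+(1-t))^2 := by rw [hf]; ring
      _ ≤ (a-b)^2*K^2 := mul_le_mul_of_nonneg_left hsq (sq_nonneg _)
      _ = K^2*(a-b)^2 := by ring
  have hbr : 0 ≤ 2*K^2*(a*b)^2 - 4*(φa*φb)*(p+a*b) := by
    have e1 : 4*(φa*φb)*(p+a*b) ≤ K^2*(a*b)*(p+a*b) :=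
      mul_le_mul_of_nonneg_right h12 (by linarith)
    have e2 : 0 ≤ K^2*(a*b)*(a*b-p) :=
      mul_nonneg (mul_nonneg (sq_nonneg K) (mul_pos ha hb).le) (by linarith)
    nlinarith
  have hA : 0 ≤ (a*b)^2 * (K^2*(a-b)^2 - (φa-φb)^2) :=
    mul_nonneg (sq_nonneg _) (by linarith)
  have hB : 0 ≤ (a*b-p) * (2*K^2*(a*b)^2 - 4*(φa*φb)*(p+a*b)) :=
    mul_nonneg (by linarith) hbr
  have hdecomp : K^2*(a^2+b^2-2*p)*(a*b)^2
      - (φa^2*(a*b)^2 + φb^2*(a*b)^2 - 2*φa*φb*(2*p^2 - (a*b)^2))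
      = (a*b)^2 * (K^2*(a-b)^2 - (φa-φb)^2)
        + (a*b-p) * (2*K^2*(a*b)^2 - 4*(φa*φb)*(p+a*b)) := by ring
  linarith

lemma lemA (t : ℝ) (ht0 : 0 ≤ t) (ht1 : t ≤ 1) (x y : ℂ) :
    ‖ut t x - ut t y‖ ≤ (2*t*(max ‖x‖ ‖y‖) + 2*(1-t)) * ‖x - y‖ := by
  have hK0 : 0 ≤ 2*t*(max ‖x‖ ‖y‖) + 2*(1-t) := by
    nlinarith [le_max_left ‖x‖ ‖y‖, norm_nonneg x]
  rcases eq_or_ne x 0 with hx | hx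
  · rcases eq_or_ne y 0 with hy | hy
    · simp [hx, hy, ut_zero]
    · have hb : 0 < ‖y‖ := norm_pos_iff.2 hy
      rw [hx, ut_zero, zero_sub, norm_neg, zero_sub, norm_neg,
        norm_ut_eq t ht0 ht1 y hy, phir]
      nlinarith [mul_nonneg (mul_nonneg ht0 (sub_nonneg.2 (le_max_right ‖(0:ℂ)‖ ‖y‖))) hb.le]
  · rcases eq_or_ne y 0 with hy | hy
    · have ha : 0 < ‖x‖ := norm_pos_iff.2 hx
      rw [hy, ut_zero, sub_zero, sub_zero, norm_ut_eq t ht0 ht1 x hx, phir]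
      nlinarith [mul_nonneg (mul_nonneg ht0 (sub_nonneg.2 (le_max_left ‖x‖ ‖(0:ℂ)‖))) ha.le]
    · have ha : 0 < ‖x‖ := norm_pos_iff.2 hx
      have hb : 0 < ‖y‖ := norm_pos_iff.2 hy
      have hax : (‖x‖ : ℂ) ≠ 0 := by
        exact_mod_cast ha.ne'
      have hay : (‖y‖ : ℂ) ≠ 0 := by
        exact_mod_cast hb.ne'
      have hux : ut t x = ((t + (1-t)/‖x‖ : ℝ):ℂ) * x^2 := by
        rw [ut, if_neg hx]
        push_cast
        field_simp
      have huy : ut t y = ((t + (1-t)/‖y‖ : ℝ):ℂ) * y^2 := by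
        rw [ut, if_neg hy]
        push_cast
        field_simp
      set a := ‖x‖ with hadef
      set b := ‖y‖ with hbdef
      set ca := (t + (1-t)/a : ℝ) with hcadef
      set cb := (t + (1-t)/b : ℝ) with hcbdef
      set p := (x * (starRingEnd ℂ) y).re with hpdef
      set q := (x * (starRingEnd ℂ) y).im with hqdef
      have hnx : Complex.normSq x = a^2 := by simp [hadef, Complex.normSq_eq_norm_sq]
      have hny : Complex.normSq y = b^2 := by simp [hbdef, Complex.normSq_eq_norm_sq]
      have hpq : p^2 + q^2 = (a*b)^2 := by
        have h5 : Complex.normSq (x * (starRingEnd ℂ) y) = p^2 + q^2 := by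
          rw [Complex.normSq_apply]; ring
        rw [← h5, Complex.normSq_mul, Complex.normSq_conj, hnx, hny]; ring
      have hN : Complex.normSq (ut t x - ut t y)
          = ca^2*(a^2)^2 + cb^2*(b^2)^2 - 2*(ca*cb)*(p^2 - q^2) := by
        rw [hux, huy, Complex.normSq_sub]
        have e1 : Complex.normSq (((ca:ℝ):ℂ) * x^2) = ca^2 * (a^2)^2 := by
          rw [Complex.normSq_mul, Complex.normSq_ofReal, map_pow, hnx]; ring
        have e2 : Complex.normSq (((cb:ℝ):ℂ) * y^2) = cb^2 * (b^2)^2 := by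
          rw [Complex.normSq_mul, Complex.normSq_ofReal, map_pow, hny]; ring
        have e3 : ((((ca:ℝ):ℂ) * x^2) * (starRingEnd ℂ) (((cb:ℝ):ℂ) * y^2)).re
            = ca*cb*(p^2 - q^2) := by
          have h6 : (((ca:ℝ):ℂ) * x^2) * (starRingEnd ℂ) (((cb:ℝ):ℂ) * y^2)
              = ((ca*cb : ℝ):ℂ) * (x * (starRingEnd ℂ) y)^2 := by
            rw [map_mul, map_pow, Complex.conj_ofReal]
            push_cast
            ring
          rw [h6, Complex.re_ofReal_mul]
          have h7 : ((x * (starRingEnd ℂ) y)^2).re = p^2 - q^2 := by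
            rw [sq, Complex.mul_re]; ring
          rw [h7]
        rw [e1, e2, e3]; ring
      have hD : Complex.normSq (x - y) = a^2 + b^2 - 2*p := by
        rw [Complex.normSq_sub, hnx, hny]
      set K := (2*t*(max a b) + 2*(1-t) : ℝ) with hKdef
      have hp1 : p ≤ a*b := by
        nlinarith [sq_nonneg q, mul_pos ha hb, sq_nonneg (p - a*b), sq_nonneg (p + a*b)]
      have hp2 : -(a*b) ≤ p := by
        nlinarith [sq_nonneg q, mul_pos ha hb, sq_nonneg (p - a*b), sq_nonneg (p + a*b)]
      have hkey := keyreal t a b p K (phir t a) (phir t b) (max a b) ht0 ht1 ha hb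
        (le_max_left a b) (le_max_right a b) (by rw [phir]) (by rw [phir]) rfl hp1 hp2
      have hca : ca * a^2 = phir t a := by rw [hcadef, phir]; field_simp
      have hcb : cb * b^2 = phir t b := by rw [hcbdef, phir]; field_simp
      have hq2 : q^2 = (a*b)^2 - p^2 := by linarith
      have hab2 : (0:ℝ) < (a*b)^2 := by positivity
      have hNle : Complex.normSq (ut t x - ut t y) ≤ K^2 * Complex.normSq (x - y) := by
        rw [hN, hD]
        have expand : (ca^2*(a^2)^2 + cb^2*(b^2)^2 - 2*(ca*cb)*(p^2 - q^2)) * (a*b)^2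
            = (phir t a)^2*(a*b)^2 + (phir t b)^2*(a*b)^2
              - 2*(phir t a)*(phir t b)*(2*p^2 - (a*b)^2) := by
          rw [← hca, ← hcb, hq2]; ring
        have hmul : (ca^2*(a^2)^2 + cb^2*(b^2)^2 - 2*(ca*cb)*(p^2 - q^2)) * (a*b)^2
            ≤ (K^2*(a^2+b^2-2*p)) * (a*b)^2 := by
          rw [expand]
          calc (phir t a)^2*(a*b)^2 + (phir t b)^2*(a*b)^2
              - 2*(phir t a)*(phir t b)*(2*p^2 - (a*b)^2)
              ≤ K^2*(a^2+b^2-2*p)*(a*b)^2 := hkey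
            _ = (K^2*(a^2+b^2-2*p)) * (a*b)^2 := by ring
        exact le_of_mul_le_mul_right hmul hab2
      have h1 : ‖ut t x - ut t y‖ = Real.sqrt (Complex.normSq (ut t x - ut t y)) := by
        rw [Complex.norm_def]
      have h2 : ‖x - y‖ = Real.sqrt (Complex.normSq (x - y)) := by
        rw [Complex.norm_def]
      rw [h1, h2]
      calc Real.sqrt (Complex.normSq (ut t x - ut t y))
          ≤ Real.sqrt (K^2 * Complex.normSq (x-y)) := Real.sqrt_le_sqrt hNle
        _ = K * Real.sqrt (Complex.normSq (x-y)) := by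
            rw [Real.sqrt_mul (sq_nonneg K), Real.sqrt_sq hK0]

-- exit lemmas and pair lemmas
lemma path_exit {V : Set ℂ} (hV : IsOpen V) (f : ℝ → ℂ) (hf : Continuous f) (η : ℝ)
    (h0 : f 0 ∈ V) (hA : ∃ θ ∈ Set.Icc (0:ℝ) η, f θ ∉ V) :
    ∃ θ', 0 < θ' ∧ θ' ≤ η ∧ f θ' ∈ frontier V := by
  set A := Set.Icc (0:ℝ) η ∩ f ⁻¹' Vᶜ with hAdef
  have hAc : IsClosed A := isClosed_Icc.inter (hV.isClosed_compl.preimage hf)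
  obtain ⟨θ₀, hθ₀, hθ₀V⟩ := hA
  have hAne : A.Nonempty := ⟨θ₀, hθ₀, hθ₀V⟩
  have hAbdd : BddBelow A := ⟨0, fun θ hθ => hθ.1.1⟩
  set θ' := sInf A with hθ'def
  have hθ'A : θ' ∈ A := hAc.csInf_mem hAne hAbdd
  have hθ'0 : 0 ≤ θ' := hθ'A.1.1
  have hθ'η : θ' ≤ η := hθ'A.1.2
  have hθ'V : f θ' ∉ V := hθ'A.2
  have hθ'pos : 0 < θ' := by
    rcases hθ'0.lt_or_eq with h | h
    · exact h
    · exact absurd (h ▸ h0) hθ'V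
  refine ⟨θ', hθ'pos, hθ'η, ?_, ?_⟩
  · -- closure
    have hIco : Set.Ico (0:ℝ) θ' ⊆ f ⁻¹' V := by
      intro θ hθ
      by_contra hc
      have : θ' ≤ θ := csInf_le hAbdd ⟨⟨hθ.1, hθ.2.le.trans hθ'η⟩, hc⟩
      exact absurd this (not_le.2 hθ.2)
    have h1 : θ' ∈ closure (Set.Ico (0:ℝ) θ') := by
      rw [closure_Ico hθ'pos.ne]
      exact ⟨hθ'0, le_refl _⟩
    have h2 : closure (Set.Ico (0:ℝ) θ') ⊆ closure (f ⁻¹' V) :=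
      closure_mono hIco
    have h3 : closure (f ⁻¹' V) ⊆ f ⁻¹' closure V := hf.closure_preimage_subset V
    exact h3 (h2 h1)
  · rw [hV.interior_eq]; exact hθ'V

lemma radial_exit {V : Set ℂ} (hV : IsOpen V) (hVb : V ⊆ Metric.ball (0:ℂ) 1)
    {p : ℂ} (hp : p ∈ V) (hp0 : p ≠ 0) :
    ∃ c : ℝ, 1 < c ∧ ((c:ℝ):ℂ) * p ∈ frontier V := by
  have hpn : 0 < ‖p‖ := norm_pos_iff.2 hp0
  have hpn1 : ‖p‖ < 1 := mem_ball_zero_iff.1 (hVb hp)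
  set η := 1/‖p‖ - 1 with hηdef
  have hη : 0 < η := by
    rw [hηdef]
    have : 1 < 1/‖p‖ := (one_lt_div hpn).2 hpn1
    linarith
  have hf : Continuous (fun θ : ℝ => ((1 + θ : ℝ):ℂ) * p) :=
    (Complex.continuous_ofReal.comp (continuous_const.add continuous_id)).mul continuous_const
  have h0 : ((1 + (0:ℝ) : ℝ):ℂ) * p ∈ V := by norm_num; exact hp
  have hA : ∃ θ ∈ Set.Icc (0:ℝ) η, ((1 + θ : ℝ):ℂ) * p ∉ V := by
    refine ⟨η, ⟨hη.le, le_refl _⟩, fun hc => ?_⟩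
    have hn1 : ‖((1 + η : ℝ):ℂ) * p‖ = 1 := by
      rw [norm_mul, Complex.norm_real, Real.norm_of_nonneg (by linarith), hηdef]
      field_simp
      ring
    have hlt := mem_ball_zero_iff.1 (hVb hc)
    rw [hn1] at hlt
    exact lt_irrefl _ hlt
  obtain ⟨θ', hθ'0, _, hθ'F⟩ := path_exit hV _ hf η h0 hA
  exact ⟨1 + θ', by linarith, hθ'F⟩

lemma phir_mono (t : ℝ) (ht0 : 0 ≤ t) (ht1 : t ≤ 1) {r s : ℝ} (hr : 0 ≤ r) (hrs : r ≤ s) :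
    phir t r ≤ phir t s := by
  rw [phir, phir]
  nlinarith [mul_nonneg (mul_nonneg ht0 (sub_nonneg.2 hrs)) (by linarith : (0:ℝ) ≤ s + r),
    mul_nonneg (sub_nonneg.2 hrs) (sub_nonneg.2 ht1)]

lemma phir_lip (t : ℝ) (ht0 : 0 ≤ t) (ht1 : t ≤ 1) {r s : ℝ} (hr : 0 ≤ r) (hs : s ≤ 1)
    (hrs : r ≤ s) : phir t s - phir t r ≤ 2*(s - r) := by
  rw [phir, phir]
  nlinarith [mul_nonneg (sub_nonneg.2 hrs) (sub_nonneg.2 ht1),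
    mul_nonneg (sub_nonneg.2 hrs) (mul_nonneg ht0 (by linarith : (0:ℝ) ≤ 2-s-r))]

/-- equal-radius pair estimate -/
lemma eqrad_pair (t s Δ : ℝ) (w : ℂ) (ht0 : 0 ≤ t) (ht1 : t ≤ 1) (hs : 0 < s)
    (hs1 : s ≤ 1) (hw : ‖w‖ = 1) (hΔ0 : 0 < Δ) (hΔ1 : Δ ≤ 1) :
    (s:ℂ)*w ≠ (s:ℂ)*w*Complex.exp ((Δ:ℂ)*Complex.I) ∧
    (t*s + (1-t))*(2-Δ) ≤
      ‖ut t ((s:ℂ)*w) - ut t ((s:ℂ)*w*Complex.exp ((Δ:ℂ)*Complex.I))‖ /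
        ‖(s:ℂ)*w - (s:ℂ)*w*Complex.exp ((Δ:ℂ)*Complex.I)‖ := by
  set e := Complex.exp ((Δ:ℂ)*Complex.I) with hedef
  have hen : ‖e‖ = 1 := norm_exp_I' Δ
  have he1 : e ≠ 1 := exp_I_ne_one Δ hΔ0.ne' (by rw [_root_.abs_of_pos hΔ0]; exact hΔ1)
  have hw0 : w ≠ 0 := by intro h; simp [h] at hw
  have hs0 : (s:ℂ) ≠ 0 := by exact_mod_cast hs.ne'
  have h1me : (1:ℂ) - e ≠ 0 := sub_ne_zero.2 (Ne.symm he1)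
  have hne : (s:ℂ)*w ≠ (s:ℂ)*w*e := by
    intro h
    apply h1me
    have h2 : (s:ℂ)*w*(1 - e) = 0 := by
      rw [mul_sub, mul_one]
      nth_rewrite 1 [h]
      exact sub_self _
    rcases mul_eq_zero.1 h2 with h3 | h3
    · exact absurd h3 (mul_ne_zero hs0 hw0)
    · exact h3
  refine ⟨hne, ?_⟩
  have hwe : ‖w*e‖ = 1 := by rw [norm_mul, hw, hen, mul_one]
  have hu1 : ut t ((s:ℂ)*w) = ((phir t s : ℝ):ℂ) * w^2 := ut_polar t s w hs hw
  have hu2 : ut t ((s:ℂ)*w*e) = ((phir t s : ℝ):ℂ) * (w*e)^2 := by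
    rw [mul_assoc]; exact ut_polar t s (w*e) hs hwe
  have hnum : ‖ut t ((s:ℂ)*w) - ut t ((s:ℂ)*w*e)‖
      = phir t s * (‖1 - e‖ * ‖1 + e‖) := by
    rw [hu1, hu2]
    have : ((phir t s : ℝ):ℂ) * w^2 - ((phir t s : ℝ):ℂ) * (w*e)^2
        = ((phir t s : ℝ):ℂ) * w^2 * ((1-e)*(1+e)) := by ring
    rw [this, norm_mul, norm_mul, norm_pow, hw, Complex.norm_real,
      Real.norm_of_nonneg (phir_nonneg t s ht0 ht1 hs.le), norm_mul]
    ring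
  have hden : ‖(s:ℂ)*w - (s:ℂ)*w*e‖ = s * ‖1 - e‖ := by
    have : (s:ℂ)*w - (s:ℂ)*w*e = (s:ℂ)*w*(1-e) := by ring
    rw [this, norm_mul, norm_mul, hw, Complex.norm_real, Real.norm_of_nonneg hs.le]
    ring
  have h1e_pos : 0 < ‖(1:ℂ) - e‖ := norm_pos_iff.2 h1me
  have h1e_le : ‖(1:ℂ) - e‖ ≤ Δ := norm_one_sub_exp_le Δ hΔ0.le
  have h1pe : 2 - Δ ≤ ‖(1:ℂ) + e‖ := by
    have htr : ‖(2:ℂ)‖ ≤ ‖(1:ℂ) + e‖ + ‖(1:ℂ) - e‖ := by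
      have : (2:ℂ) = (1 + e) + (1 - e) := by ring
      rw [this]; exact norm_add_le _ _
    have h2 : ‖(2:ℂ)‖ = 2 := by norm_num
    linarith
  rw [hnum, hden, le_div_iff₀ (by positivity : (0:ℝ) < s * ‖(1:ℂ) - e‖)]
  have hts : 0 ≤ t*s + (1-t) := by nlinarith
  have hexp : phir t s = (t*s + (1-t)) * s := by rw [phir]; ring
  rw [hexp]
  have hm := mul_le_mul_of_nonneg_left h1pe
    (mul_nonneg (mul_nonneg hts hs.le) (norm_nonneg ((1:ℂ)-e)))
  nlinarith [hm]

/-- different-radius pair estimate -/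
lemma neqrad_pair (t ρ₁ ρ₂ : ℝ) (w ω : ℂ) (ht0 : 0 ≤ t) (ht1 : t ≤ 1)
    (hρ₁ : 0 < ρ₁) (hρ₂ : 0 < ρ₂) (hw : ‖w‖ = 1) (hω : ‖ω‖ = 1) (hω1 : ω ≠ 1) :
    (ρ₁:ℂ)*w ≠ (ρ₂:ℂ)*(w*ω) ∧
    ‖(ρ₁:ℂ)*w - (ρ₂:ℂ)*(w*ω)‖ ≤ ρ₂*‖1-ω‖ + |ρ₁-ρ₂| ∧
    phir t ρ₂*(‖1-ω‖*(2-‖1-ω‖)) - |phir t ρ₁ - phir t ρ₂|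
      ≤ ‖ut t ((ρ₁:ℂ)*w) - ut t ((ρ₂:ℂ)*(w*ω))‖ := by
  have hw0 : w ≠ 0 := by intro h; simp [h] at hw
  have hwω : ‖w*ω‖ = 1 := by rw [norm_mul, hw, hω, mul_one]
  have h1mω : (1:ℂ) - ω ≠ 0 := sub_ne_zero.2 (Ne.symm hω1)
  refine ⟨?_, ?_, ?_⟩
  · intro h
    have hn : ρ₁ = ρ₂ := by
      have h1 : ‖(ρ₁:ℂ)*w‖ = ρ₁ := by
        rw [norm_mul, hw, Complex.norm_real, Real.norm_of_nonneg hρ₁.le]; ring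
      have h2 : ‖(ρ₂:ℂ)*(w*ω)‖ = ρ₂ := by
        rw [norm_mul, hwω, Complex.norm_real, Real.norm_of_nonneg hρ₂.le]; ring
      rw [← h1, ← h2, h]
    rw [hn] at h
    have hρ0 : ((ρ₂:ℝ):ℂ) ≠ 0 := by exact_mod_cast hρ₂.ne'
    have h3 : w * 1 = w * ω := by
      rw [mul_one]
      exact mul_left_cancel₀ hρ0 h
    exact hω1 (mul_left_cancel₀ hw0 h3).symm
  · have hid : (ρ₁:ℂ)*w - (ρ₂:ℂ)*(w*ω)
        = w * (((ρ₁:ℝ):ℂ) - ((ρ₂:ℝ):ℂ)) + w * (((ρ₂:ℝ):ℂ) * (1 - ω)) := by ring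
    rw [hid]
    calc ‖w * (((ρ₁:ℝ):ℂ) - ((ρ₂:ℝ):ℂ)) + w * (((ρ₂:ℝ):ℂ) * (1 - ω))‖
        ≤ ‖w * (((ρ₁:ℝ):ℂ) - ((ρ₂:ℝ):ℂ))‖ + ‖w * (((ρ₂:ℝ):ℂ) * (1 - ω))‖ := norm_add_le _ _
      _ = |ρ₁-ρ₂| + ρ₂*‖1-ω‖ := by
          rw [norm_mul, norm_mul, hw, norm_mul, Complex.norm_real,
            Real.norm_of_nonneg hρ₂.le]
          rw [show ((ρ₁:ℝ):ℂ) - ((ρ₂:ℝ):ℂ) = ((ρ₁ - ρ₂ : ℝ):ℂ) by push_cast; ring,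
            Complex.norm_real, Real.norm_eq_abs]
          ring
      _ = ρ₂*‖1-ω‖ + |ρ₁-ρ₂| := by ring
  · have hu1 : ut t ((ρ₁:ℂ)*w) = ((phir t ρ₁ : ℝ):ℂ) * w^2 := ut_polar t ρ₁ w hρ₁ hw
    have hu2 : ut t ((ρ₂:ℂ)*(w*ω)) = ((phir t ρ₂ : ℝ):ℂ) * (w*ω)^2 := ut_polar t ρ₂ _ hρ₂ hwω
    have hid : ((phir t ρ₁ : ℝ):ℂ) * w^2 - ((phir t ρ₂ : ℝ):ℂ) * (w*ω)^2
        = w^2 * (((phir t ρ₂ : ℝ):ℂ) * ((1-ω)*(1+ω)))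
          + w^2 * (((phir t ρ₁ : ℝ):ℂ) - ((phir t ρ₂ : ℝ):ℂ)) := by ring
    rw [hu1, hu2, hid]
    have htri : ‖w^2 * (((phir t ρ₂ : ℝ):ℂ) * ((1-ω)*(1+ω)))‖
          - ‖w^2 * (((phir t ρ₁ : ℝ):ℂ) - ((phir t ρ₂ : ℝ):ℂ))‖
        ≤ ‖w^2 * (((phir t ρ₂ : ℝ):ℂ) * ((1-ω)*(1+ω)))
          + w^2 * (((phir t ρ₁ : ℝ):ℂ) - ((phir t ρ₂ : ℝ):ℂ))‖ := by
      have h9 := norm_sub_norm_le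
        (w^2 * (((phir t ρ₂ : ℝ):ℂ) * ((1-ω)*(1+ω))))
        (-(w^2 * (((phir t ρ₁ : ℝ):ℂ) - ((phir t ρ₂ : ℝ):ℂ))))
      rw [norm_neg, sub_neg_eq_add] at h9
      linarith
    have he1 : ‖w^2 * (((phir t ρ₂ : ℝ):ℂ) * ((1-ω)*(1+ω)))‖
        = phir t ρ₂ * (‖1-ω‖ * ‖1+ω‖) := by
      rw [norm_mul, norm_pow, hw, norm_mul, norm_mul, Complex.norm_real,
        Real.norm_of_nonneg (phir_nonneg t ρ₂ ht0 ht1 hρ₂.le)]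
      ring
    have he2 : ‖w^2 * (((phir t ρ₁ : ℝ):ℂ) - ((phir t ρ₂ : ℝ):ℂ))‖
        = |phir t ρ₁ - phir t ρ₂| := by
      rw [norm_mul, norm_pow, hw,
        show ((phir t ρ₁ : ℝ):ℂ) - ((phir t ρ₂ : ℝ):ℂ)
          = ((phir t ρ₁ - phir t ρ₂ : ℝ):ℂ) by push_cast; ring,
        Complex.norm_real, Real.norm_eq_abs]
      ring
    have h1pω : 2 - ‖(1:ℂ)-ω‖ ≤ ‖(1:ℂ)+ω‖ := by
      have htr : ‖(2:ℂ)‖ ≤ ‖(1:ℂ) + ω‖ + ‖(1:ℂ) - ω‖ := by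
        have : (2:ℂ) = (1 + ω) + (1 - ω) := by ring
        rw [this]; exact norm_add_le _ _
      have h2 : ‖(2:ℂ)‖ = 2 := by norm_num
      linarith
    have hmono : phir t ρ₂*(‖1-ω‖*(2-‖1-ω‖)) ≤ phir t ρ₂ * (‖1-ω‖ * ‖1+ω‖) := by
      apply mul_le_mul_of_nonneg_left _ (phir_nonneg t ρ₂ ht0 ht1 hρ₂.le)
      exact mul_le_mul_of_nonneg_left h1pω (norm_nonneg _)
    rw [← he1] at hmono
    rw [← he2] at *
    linarith

lemma LipOn_le (f : ℂ → ℂ) (S : Set ℂ) (M : ℝ) (hM : 0 ≤ M)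
    (h : ∀ x ∈ S, ∀ y ∈ S, x ≠ y → ‖f x - f y‖ / ‖x - y‖ ≤ M) : LipOn f S ≤ M := by
  apply Real.sSup_le _ hM
  rintro c ⟨x, hx, y, hy, hxy, rfl⟩
  exact h x hx y hy hxy

lemma le_LipOn (f : ℂ → ℂ) (S : Set ℂ) (M K : ℝ)
    (hM : ∀ x ∈ S, ∀ y ∈ S, x ≠ y → ‖f x - f y‖ / ‖x - y‖ ≤ M)
    (h : ∀ ε > (0:ℝ), ∃ x ∈ S, ∃ y ∈ S, x ≠ y ∧ K - ε ≤ ‖f x - f y‖ / ‖x - y‖) :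
    K ≤ LipOn f S := by
  have hbdd : BddAbove {c : ℝ | ∃ x ∈ S, ∃ y ∈ S, x ≠ y ∧ c = ‖f x - f y‖ / ‖x - y‖} := by
    refine ⟨M, ?_⟩
    rintro c ⟨x, hx, y, hy, hxy, rfl⟩
    exact hM x hx y hy hxy
  by_contra hlt
  push_neg at hlt
  obtain ⟨x, hx, y, hy, hxy, hle⟩ := h ((K - LipOn f S)/2) (by linarith)
  have : ‖f x - f y‖ / ‖x - y‖ ≤ LipOn f S :=
    le_csSup hbdd ⟨x, hx, y, hy, hxy, rfl⟩
  linarith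

lemma ratio_le (t : ℝ) (ht0 : 0 ≤ t) (ht1 : t ≤ 1) (R : ℝ) (x y : ℂ)
    (hx : ‖x‖ ≤ R) (hy : ‖y‖ ≤ R) (hxy : x ≠ y) :
    ‖ut t x - ut t y‖ / ‖x - y‖ ≤ 2*t*R + 2*(1-t) := by
  have hd : 0 < ‖x - y‖ := by rw [norm_pos_iff, sub_ne_zero]; exact hxy
  rw [div_le_iff₀ hd]
  calc ‖ut t x - ut t y‖ ≤ (2*t*(max ‖x‖ ‖y‖) + 2*(1-t)) * ‖x - y‖ := lemA t ht0 ht1 x y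
    _ ≤ (2*t*R + 2*(1-t)) * ‖x - y‖ := by
        apply mul_le_mul_of_nonneg_right _ hd.le
        have h1 : max ‖x‖ ‖y‖ ≤ R := max_le hx hy
        have h2 : 0 ≤ max ‖x‖ ‖y‖ := le_max_of_le_left (norm_nonneg x)
        nlinarith

lemma phir_abs_lip (t : ℝ) (ht0 : 0 ≤ t) (ht1 : t ≤ 1) {r s : ℝ} (hr : 0 ≤ r) (hr1 : r ≤ 1)
    (hs : 0 ≤ s) (hs1 : s ≤ 1) : |phir t r - phir t s| ≤ 2*|r - s| := by
  rcases le_total r s with h | h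
  · rw [_root_.abs_of_nonpos (by linarith [phir_mono t ht0 ht1 hr h]), _root_.abs_of_nonpos (by linarith)]
    linarith [phir_lip t ht0 ht1 hr hs1 h]
  · rw [_root_.abs_of_nonneg (by linarith [phir_mono t ht0 ht1 hs h]), _root_.abs_of_nonneg (by linarith)]
    linarith [phir_lip t ht0 ht1 hs hr1 h]

lemma norm_one_sub_exp_neg (θ : ℝ) :
    ‖1 - Complex.exp (((-θ:ℝ):ℂ) * Complex.I)‖ = ‖1 - Complex.exp ((θ:ℂ) * Complex.I)‖ := by
  have hconj : (starRingEnd ℂ) (1 - Complex.exp ((θ:ℂ) * Complex.I))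
      = 1 - Complex.exp (((-θ:ℝ):ℂ) * Complex.I) := by
    rw [map_sub, map_one, ← Complex.exp_conj]
    congr 2
    simp [Complex.conj_I, Complex.conj_ofReal]
    try ring
  rw [← hconj, RCLike.norm_conj]


set_option maxHeartbeats 1000000 in
lemma case_arc (V : Set ℂ) (hV : IsOpen V) (hVb : V ⊆ Metric.ball (0:ℂ) 1)
    (t R K ε η δ s : ℝ) (w ω : ℂ)
    (ht0 : 0 ≤ t) (ht1 : t ≤ 1)
    (hR0 : 0 < R) (hR1 : R ≤ 1) (hKdef : K = 2*t*R + 2*(1-t)) (hK2 : K ≤ 2)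
    (hε : 0 < ε) (hεK : ε < K)
    (hη0 : 0 < η) (hη1 : η ≤ 1/2) (hηε : η ≤ ε/8)
    (hw : ‖w‖ = 1) (hω : ‖ω‖ = 1) (hω1 : ω ≠ 1)
    (heη : ‖(1:ℂ) - ω‖ ≤ η)
    (hδ0 : 0 < δ) (hδ1 : δ ≤ ε*R*(‖(1:ℂ) - ω‖)/100)
    (hspos : 0 < s) (hsR : s ≤ R) (hps : R - δ < s)
    (hfr : ∀ z ∈ frontier V, ‖z‖ ≤ R)
    (hp1 : (s:ℂ)*w ∈ V) (hp2 : (s:ℂ)*(w*ω) ∈ V) :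
    ∃ x ∈ frontier V, ∃ y ∈ frontier V, x ≠ y ∧
      K - ε ≤ ‖ut t x - ut t y‖ / ‖x - y‖ := by
  set e := ‖(1:ℂ) - ω‖ with hedef
  have he0 : 0 < e := norm_pos_iff.2 (sub_ne_zero.2 (Ne.symm hω1))
  have hw0 : w ≠ 0 := by intro h; simp [h] at hw
  have hω0 : ω ≠ 0 := by intro h; simp [h] at hω
  have hs0 : (s:ℂ) ≠ 0 := by exact_mod_cast hspos.ne'
  obtain ⟨c₁, hc₁, hq₁F⟩ := radial_exit hV hVb hp1 (mul_ne_zero hs0 hw0)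
  obtain ⟨c₂, hc₂, hq₂F⟩ := radial_exit hV hVb hp2 (mul_ne_zero hs0 (mul_ne_zero hw0 hω0))
  set ρ₁ := c₁ * s with hρ₁def
  set ρ₂ := c₂ * s with hρ₂def
  have hq₁ : ((c₁:ℝ):ℂ) * ((s:ℂ)*w) = ((ρ₁:ℝ):ℂ) * w := by
    rw [hρ₁def]; push_cast; ring
  have hq₂ : ((c₂:ℝ):ℂ) * ((s:ℂ)*(w*ω)) = ((ρ₂:ℝ):ℂ) * (w*ω) := by
    rw [hρ₂def]; push_cast; ring
  rw [hq₁] at hq₁F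
  rw [hq₂] at hq₂F
  have hρ₁pos : 0 < ρ₁ := mul_pos (lt_trans one_pos hc₁) hspos
  have hρ₂pos : 0 < ρ₂ := mul_pos (lt_trans one_pos hc₂) hspos
  have hρ₁s : s ≤ ρ₁ := by
    rw [hρ₁def]; nlinarith [mul_le_mul_of_nonneg_right hc₁.le hspos.le]
  have hρ₂s : s ≤ ρ₂ := by
    rw [hρ₂def]; nlinarith [mul_le_mul_of_nonneg_right hc₂.le hspos.le]
  have hρ₁R : ρ₁ ≤ R := by
    have h1 := hfr _ hq₁F
    rwa [norm_mul, Complex.norm_real, Real.norm_of_nonneg hρ₁pos.le, hw, mul_one] at h1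
  have hρ₂R : ρ₂ ≤ R := by
    have h1 := hfr _ hq₂F
    have hwω : ‖w*ω‖ = 1 := by rw [norm_mul, hw, hω, mul_one]
    rwa [norm_mul, Complex.norm_real, Real.norm_of_nonneg hρ₂pos.le, hwω, mul_one] at h1
  obtain ⟨hne, hD, hN⟩ := neqrad_pair t ρ₁ ρ₂ w ω ht0 ht1 hρ₁pos hρ₂pos hw hω hω1
  refine ⟨_, hq₁F, _, hq₂F, hne, ?_⟩
  -- numeric bounds
  have hρd : |ρ₁ - ρ₂| ≤ δ := by
    rw [abs_le]; constructor <;> nlinarith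
  have hφd : |phir t ρ₁ - phir t ρ₂| ≤ 2*δ := by
    have h1 := phir_abs_lip t ht0 ht1 hρ₁pos.le (hρ₁R.trans hR1) hρ₂pos.le (hρ₂R.trans hR1)
    linarith
  have hφR : phir t R = K*R/2 := by rw [phir, hKdef]; ring
  have hφρ₂ : K*R/2 - 2*δ ≤ phir t ρ₂ := by
    have h1 := phir_lip t ht0 ht1 hρ₂pos.le hR1 hρ₂R
    rw [hφR] at h1
    linarith
  have hφρ₂0 : 0 ≤ phir t ρ₂ := phir_nonneg t ρ₂ ht0 ht1 hρ₂pos.le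
  have hDpos : 0 < ‖((ρ₁:ℝ):ℂ) * w - ((ρ₂:ℝ):ℂ) * (w*ω)‖ := by
    rw [norm_pos_iff, sub_ne_zero]; exact hne
  rw [le_div_iff₀ hDpos]
  -- arithmetic chain
  have st0 : 0 ≤ K*R/2 - 2*δ := by
    have u : ε*e ≤ K*(1/2) := mul_le_mul hεK.le (heη.trans hη1) he0.le (by linarith)
    nlinarith [mul_le_mul_of_nonneg_right u hR0.le, mul_pos hR0 he0, mul_nonneg (mul_nonneg hε.le hR0.le) he0.le]
  have st1 : (K*R/2 - 2*δ)*(e*(2-η)) ≤ phir t ρ₂*(e*(2-e)) := by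
    have u1 : e*(2-η) ≤ e*(2-e) := mul_le_mul_of_nonneg_left (by linarith) he0.le
    have u2 : 0 ≤ e*(2-η) := mul_nonneg he0.le (by linarith)
    exact mul_le_mul hφρ₂ u1 u2 hφρ₂0
  have w2 : e*(2-η) ≤ 1 := by nlinarith
  have w4 : δ*(e*(2-η)) ≤ δ := by nlinarith
  have w1 : K*(R*e)*η ≤ 2*(R*e)*(ε/8) :=
    mul_le_mul (mul_le_mul_of_nonneg_right hK2 (by positivity)) hηε hη0.le (by positivity)
  have w3 : 100*δ ≤ ε*R*e := by linarith
  have w5 : K*δ ≤ 2*δ := mul_le_mul_of_nonneg_right hK2 hδ0.le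
  have w6 : 0 ≤ ε*δ := mul_nonneg hε.le hδ0.le
  have st2 : (K-ε)*(R*e+δ) + 2*δ ≤ (K*R/2 - 2*δ)*(e*(2-η)) := by
    nlinarith [w1, w3, w4, w5, w6, mul_pos he0 hδ0, mul_pos hR0 he0,
      mul_nonneg (mul_nonneg hε.le hR0.le) he0.le]
  have hDle : ‖((ρ₁:ℝ):ℂ) * w - ((ρ₂:ℝ):ℂ) * (w*ω)‖ ≤ R*e + δ := by
    have : ρ₂*e ≤ R*e := mul_le_mul_of_nonneg_right hρ₂R he0.le
    linarith
  have hKε : 0 ≤ K - ε := by linarith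
  calc (K - ε) * ‖((ρ₁:ℝ):ℂ) * w - ((ρ₂:ℝ):ℂ) * (w*ω)‖
      ≤ (K - ε) * (R*e + δ) := mul_le_mul_of_nonneg_left hDle hKε
    _ ≤ phir t ρ₂*(e*(2-e)) - 2*δ := by linarith [st1, st2]
    _ ≤ ‖ut t (((ρ₁:ℝ):ℂ) * w) - ut t (((ρ₂:ℝ):ℂ) * (w*ω))‖ := by linarith [hN, hφd]


set_option maxHeartbeats 1000000 in
lemma case_exit (V : Set ℂ) (hV : IsOpen V)
    (t R K ε η δ s : ℝ) (p : ℂ)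
    (ht0 : 0 ≤ t) (ht1 : t ≤ 1)
    (hR0 : 0 < R) (hR1 : R ≤ 1) (hKdef : K = 2*t*R + 2*(1-t)) (hK2 : K ≤ 2)
    (hε : 0 < ε) (hεK : ε < K)
    (hη0 : 0 < η) (hη1 : η ≤ 1/2) (hηε : η ≤ ε/8)
    (hδ0 : 0 < δ) (hδε : δ ≤ ε/8)
    (hsdef : s = ‖p‖) (hspos : 0 < s) (hsR : s ≤ R) (hs1 : s ≤ 1) (hps : R - δ < s)
    (hpV : p ∈ V)
    (h1 : ∃ θ' ∈ Set.Icc (0:ℝ) η, p * Complex.exp ((θ':ℂ)*Complex.I) ∉ V)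
    (h2 : ∃ θ' ∈ Set.Icc (0:ℝ) η, p * Complex.exp (((-θ':ℝ):ℂ)*Complex.I) ∉ V) :
    ∃ x ∈ frontier V, ∃ y ∈ frontier V, x ≠ y ∧
      K - ε ≤ ‖ut t x - ut t y‖ / ‖x - y‖ := by
  have hp0 : p ≠ 0 := by
    intro h; rw [h, norm_zero] at hsdef; exact hspos.ne' hsdef
  have hfplus : Continuous (fun θ : ℝ => p * Complex.exp ((θ:ℂ)*Complex.I)) :=
    continuous_const.mul (Complex.continuous_exp.comp
      (Complex.continuous_ofReal.mul continuous_const))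
  have hfminus : Continuous (fun θ : ℝ => p * Complex.exp (((-θ:ℝ):ℂ)*Complex.I)) :=
    continuous_const.mul (Complex.continuous_exp.comp
      ((Complex.continuous_ofReal.comp continuous_neg).mul continuous_const))
  obtain ⟨θ₁, hθ₁0, hθ₁η, hbF⟩ := path_exit hV _ hfplus η (by simpa using hpV) h1
  obtain ⟨θ₂, hθ₂0, hθ₂η, haF⟩ := path_exit hV _ hfminus η (by simpa using hpV) h2
  set Δ := θ₁ + θ₂ with hΔdef
  have hΔ0 : 0 < Δ := by rw [hΔdef]; linarith
  have hΔ1 : Δ ≤ 1 := by rw [hΔdef]; linarith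
  set w := ((s:ℝ):ℂ)⁻¹ * p with hwdef
  have hs0 : ((s:ℝ):ℂ) ≠ 0 := by exact_mod_cast hspos.ne'
  have hw : ‖w‖ = 1 := by
    rw [hwdef, norm_mul, norm_inv, Complex.norm_real, Real.norm_of_nonneg hspos.le,
      ← hsdef]
    field_simp
  have hpw : p = ((s:ℝ):ℂ) * w := by
    rw [hwdef, ← mul_assoc, mul_inv_cancel₀ hs0, one_mul]
  set w' := w * Complex.exp (((-θ₂:ℝ):ℂ)*Complex.I) with hw'def
  have hw' : ‖w'‖ = 1 := by
    rw [hw'def, norm_mul, hw, norm_exp_I' (-θ₂), mul_one]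
  have ha_eq : p * Complex.exp (((-θ₂:ℝ):ℂ)*Complex.I) = ((s:ℝ):ℂ)*w' := by
    rw [hw'def]
    nth_rewrite 1 [hpw]
    ring
  have hexp : Complex.exp (((-θ₂:ℝ):ℂ)*Complex.I) * Complex.exp ((Δ:ℂ)*Complex.I)
      = Complex.exp ((θ₁:ℂ)*Complex.I) := by
    rw [← Complex.exp_add]
    congr 1
    rw [hΔdef]
    push_cast
    ring
  have hb_eq : p * Complex.exp ((θ₁:ℂ)*Complex.I)
      = ((s:ℝ):ℂ)*w'*Complex.exp ((Δ:ℂ)*Complex.I) := by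
    calc p * Complex.exp ((θ₁:ℂ)*Complex.I)
        = ((s:ℝ):ℂ) * w * Complex.exp ((θ₁:ℂ)*Complex.I) := by rw [← hpw]
      _ = ((s:ℝ):ℂ)*w'*Complex.exp ((Δ:ℂ)*Complex.I) := by rw [hw'def, ← hexp]; ring
  obtain ⟨hne, hratio⟩ := eqrad_pair t s Δ w' ht0 ht1 hspos hs1 hw' hΔ0 hΔ1
  refine ⟨_, haF, _, hbF, ?_, ?_⟩
  · rw [ha_eq, hb_eq]; exact hne
  · rw [ha_eq, hb_eq]
    have harith : K - ε ≤ (t*s+(1-t))*(2-Δ) := by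
      have h8 : t*(R-δ) ≤ t*s := mul_le_mul_of_nonneg_left (by linarith) ht0
      have h9 : t*δ ≤ δ := by nlinarith
      have h7 : K/2 - δ ≤ t*s + (1-t) := by rw [hKdef]; nlinarith
      have hKθ : K*Δ ≤ 2*Δ := mul_le_mul_of_nonneg_right hK2 hΔ0.le
      have hΔ2η : Δ ≤ 2*η := by rw [hΔdef]; linarith
      nlinarith [mul_le_mul_of_nonneg_right h7 (show (0:ℝ) ≤ 2-Δ by linarith),
        mul_nonneg hδ0.le hΔ0.le, hKθ, hΔ2η, hηε, hδε, hε.le]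
    exact le_trans harith hratio


set_option maxHeartbeats 1000000 in
lemma part1 (t : ℝ) (ht0 : 0 ≤ t) (ht1 : t ≤ 1) (V : Set ℂ) (hV : IsOpen V)
    (hVb : V ⊆ Metric.ball (0:ℂ) 1) :
    LipOn (ut t) V = LipOn (ut t) (frontier V) := by
  rcases V.eq_empty_or_nonempty with hVe | hVne
  · rw [hVe, frontier_empty]
  set R := sSup (norm '' V) with hRdef
  have hb1 : ∀ x ∈ V, ‖x‖ ≤ 1 := fun x hx => (mem_ball_zero_iff.1 (hVb hx)).le
  have hbddn : BddAbove (norm '' V) := ⟨1, by rintro v ⟨x, hx, rfl⟩; exact hb1 x hx⟩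
  have himne : (norm '' V).Nonempty := hVne.image _
  have hR1 : R ≤ 1 := csSup_le himne (by rintro v ⟨x, hx, rfl⟩; exact hb1 x hx)
  have hmemle : ∀ x ∈ V, ‖x‖ ≤ R := fun x hx => le_csSup hbddn ⟨x, hx, rfl⟩
  have hRpos : 0 < R := by
    obtain ⟨z, hz⟩ := hVne
    rcases eq_or_ne z 0 with h0 | h0
    · obtain ⟨r, hr, hball⟩ := Metric.isOpen_iff.1 hV z hz
      have hwm : ((r/2 : ℝ):ℂ) ∈ V := by
        apply hball
        rw [Metric.mem_ball, h0, dist_zero_right, Complex.norm_real,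
          Real.norm_of_nonneg (by linarith)]
        linarith
      have h2 := hmemle _ hwm
      rw [Complex.norm_real, Real.norm_of_nonneg (by linarith : (0:ℝ) ≤ r/2)] at h2
      linarith
    · exact lt_of_lt_of_le (norm_pos_iff.2 h0) (hmemle z hz)
  have hcl : ∀ z ∈ closure V, ‖z‖ ≤ R := by
    intro z hz
    have hsub : V ⊆ {z : ℂ | ‖z‖ ≤ R} := fun x hx => hmemle x hx
    exact closure_minimal hsub (isClosed_le continuous_norm continuous_const) hz
  have hfr : ∀ z ∈ frontier V, ‖z‖ ≤ R := fun z hz => hcl z (frontier_subset_closure hz)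
  set K := 2*t*R + 2*(1-t) with hKdef
  have hK2 : K ≤ 2 := by
    rw [hKdef]; nlinarith [mul_nonneg ht0 (sub_nonneg.2 hR1)]
  have hKpos : 0 < K := by
    rw [hKdef]
    have h5 : t*(1-R) ≤ 1*(1-R) := mul_le_mul_of_nonneg_right ht1 (by linarith)
    nlinarith
  have pick : ∀ γ > (0:ℝ), ∃ p ∈ V, R - γ < ‖p‖ := by
    intro γ hγ
    obtain ⟨v, ⟨p, hp, rfl⟩, hv⟩ := exists_lt_of_lt_csSup himne (by linarith : R - γ < R)
    exact ⟨p, hp, hv⟩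
  have upperV : LipOn (ut t) V ≤ K :=
    LipOn_le _ _ _ hKpos.le
      (fun x hx y hy hxy => ratio_le t ht0 ht1 R x y (hmemle x hx) (hmemle y hy) hxy)
  have upperF : LipOn (ut t) (frontier V) ≤ K :=
    LipOn_le _ _ _ hKpos.le
      (fun x hx y hy hxy => ratio_le t ht0 ht1 R x y (hfr x hx) (hfr y hy) hxy)
  have lowerV : K ≤ LipOn (ut t) V := by
    apply le_LipOn _ _ K _
      (fun x hx y hy hxy => ratio_le t ht0 ht1 R x y (hmemle x hx) (hmemle y hy) hxy)
    intro ε hε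
    have hδ0 : 0 < min (ε/8) (R/2) := lt_min (by linarith) (by linarith)
    set δ := min (ε/8) (R/2) with hδdef
    have hδε : δ ≤ ε/8 := min_le_left _ _
    have hδR : δ ≤ R/2 := min_le_right _ _
    obtain ⟨p, hpV, hps⟩ := pick δ hδ0
    set s := ‖p‖ with hsdef
    have hsR : s ≤ R := hmemle p hpV
    have hspos : 0 < s := by linarith
    have hp0 : p ≠ 0 := by
      intro h; rw [hsdef, h, norm_zero] at hspos; exact lt_irrefl _ hspos
    have hs1 : s ≤ 1 := hsR.trans hR1
    obtain ⟨r, hr, hball⟩ := Metric.isOpen_iff.1 hV p hpV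
    set θ := min (min (ε/8) (1/2)) (r/2) with hθdef
    have hθ0 : 0 < θ := lt_min (lt_min (by linarith) (by norm_num)) (by linarith)
    have hθ1 : θ ≤ 1/2 := le_trans (min_le_left _ _) (min_le_right _ _)
    have hθε : θ ≤ ε/8 := le_trans (min_le_left _ _) (min_le_left _ _)
    have hθr : θ ≤ r/2 := min_le_right _ _
    set w := ((s:ℝ):ℂ)⁻¹ * p with hwdef
    have hs0 : ((s:ℝ):ℂ) ≠ 0 := by exact_mod_cast hspos.ne'
    have hw : ‖w‖ = 1 := by
      rw [hwdef, norm_mul, norm_inv, Complex.norm_real, Real.norm_of_nonneg hspos.le, ← hsdef]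
      field_simp
    have hpw : p = ((s:ℝ):ℂ) * w := by
      rw [hwdef, ← mul_assoc, mul_inv_cancel₀ hs0, one_mul]
    obtain ⟨hne, hratio⟩ := eqrad_pair t s θ w ht0 ht1 hspos hs1 hw hθ0 (by linarith)
    set b := ((s:ℝ):ℂ)*w*Complex.exp ((θ:ℂ)*Complex.I) with hbdef
    have hbV : b ∈ V := by
      apply hball
      rw [Metric.mem_ball, dist_eq_norm]
      have hbp : b - p = ((s:ℝ):ℂ)*w*(Complex.exp ((θ:ℂ)*Complex.I) - 1) := by
        rw [hbdef]
        nth_rewrite 1 [hpw]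
        ring
      rw [hbp, norm_mul, norm_mul, hw, Complex.norm_real, Real.norm_of_nonneg hspos.le]
      have h6 : ‖Complex.exp ((θ:ℂ)*Complex.I) - 1‖ ≤ θ := by
        rw [norm_sub_rev]; exact norm_one_sub_exp_le θ hθ0.le
      have h7 : s * ‖Complex.exp ((θ:ℂ)*Complex.I) - 1‖ ≤ 1 * θ :=
        mul_le_mul hs1 h6 (norm_nonneg _) zero_le_one
      nlinarith
    refine ⟨p, hpV, b, hbV, ?_, ?_⟩
    · rw [hpw]; exact hne
    · rw [hpw]
      rcases le_or_gt K ε with hεK | hεK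
      · have h8 : (0:ℝ) ≤ ‖ut t (((s:ℝ):ℂ)*w) - ut t b‖ / ‖((s:ℝ):ℂ)*w - b‖ :=
          div_nonneg (norm_nonneg _) (norm_nonneg _)
        linarith
      · have harith : K - ε ≤ (t*s+(1-t))*(2-θ) := by
          have h8 : t*(R-δ) ≤ t*s := mul_le_mul_of_nonneg_left (by linarith) ht0
          have h9 : t*δ ≤ δ := by nlinarith
          have h7 : K/2 - δ ≤ t*s + (1-t) := by rw [hKdef]; nlinarith
          have hKθ : K*θ ≤ 2*θ := mul_le_mul_of_nonneg_right hK2 hθ0.le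
          nlinarith [mul_le_mul_of_nonneg_right h7 (show (0:ℝ) ≤ 2-θ by linarith),
            mul_nonneg hδ0.le hθ0.le, hKθ, hθε, hδε, hε.le]
        exact le_trans harith hratio
  have lowerF : K ≤ LipOn (ut t) (frontier V) := by
    apply le_LipOn _ _ K _
      (fun x hx y hy hxy => ratio_le t ht0 ht1 R x y (hfr x hx) (hfr y hy) hxy)
    intro ε hε
    set ε' := min ε (K/2) with hε'def
    have hε'0 : 0 < ε' := lt_min hε (by linarith)
    have hε'K : ε' < K := lt_of_le_of_lt (min_le_right _ _) (by linarith)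
    have hε'ε : ε' ≤ ε := min_le_left _ _
    set η := min (ε'/8) (1/2) with hηdef
    have hη0 : 0 < η := lt_min (by linarith) (by norm_num)
    have hη1 : η ≤ 1/2 := min_le_right _ _
    have hηε : η ≤ ε'/8 := min_le_left _ _
    set ω := Complex.exp ((η:ℂ)*Complex.I) with hωdef
    have hωn : ‖ω‖ = 1 := norm_exp_I' η
    have hω1 : ω ≠ 1 := exp_I_ne_one η hη0.ne' (by rw [_root_.abs_of_pos hη0]; linarith)
    set e := ‖(1:ℂ) - ω‖ with hedef
    have he0 : 0 < e := norm_pos_iff.2 (sub_ne_zero.2 (Ne.symm hω1))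
    have heη : e ≤ η := norm_one_sub_exp_le η hη0.le
    set δ := min (ε'*R*e/100) (min (R/2) (ε'/8)) with hδdef
    have hδ0 : 0 < δ := lt_min (by positivity) (lt_min (by linarith) (by linarith))
    have hδ1 : δ ≤ ε'*R*e/100 := min_le_left _ _
    have hδR : δ ≤ R/2 := le_trans (min_le_right _ _) (min_le_left _ _)
    have hδε : δ ≤ ε'/8 := le_trans (min_le_right _ _) (min_le_right _ _)
    obtain ⟨p, hpV, hps⟩ := pick δ hδ0
    set s := ‖p‖ with hsdef
    have hsR : s ≤ R := hmemle p hpV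
    have hspos : 0 < s := by linarith
    have hp0 : p ≠ 0 := by
      intro h; rw [hsdef, h, norm_zero] at hspos; exact lt_irrefl _ hspos
    have hs1 : s ≤ 1 := hsR.trans hR1
    set w := ((s:ℝ):ℂ)⁻¹ * p with hwdef
    have hs0 : ((s:ℝ):ℂ) ≠ 0 := by exact_mod_cast hspos.ne'
    have hw : ‖w‖ = 1 := by
      rw [hwdef, norm_mul, norm_inv, Complex.norm_real, Real.norm_of_nonneg hspos.le, ← hsdef]
      field_simp
    have hpw : p = ((s:ℝ):ℂ) * w := by
      rw [hwdef, ← mul_assoc, mul_inv_cancel₀ hs0, one_mul]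
    have hp1V : ((s:ℝ):ℂ)*w ∈ V := by rw [← hpw]; exact hpV
    by_cases hc1 : ∀ θ' ∈ Set.Icc (0:ℝ) η, p * Complex.exp ((θ':ℂ)*Complex.I) ∈ V
    · have h10 := hc1 η ⟨hη0.le, le_refl _⟩
      have hp2V : ((s:ℝ):ℂ)*(w*ω) ∈ V := by
        have h11 : ((s:ℝ):ℂ)*(w*ω) = p * Complex.exp ((η:ℂ)*Complex.I) := by
          rw [hωdef, ← mul_assoc, ← hpw]
        rw [h11]; exact h10
      obtain ⟨x, hxF, y, hyF, hxy, hb⟩ := case_arc V hV hVb t R K ε' η δ s w ω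
        ht0 ht1 hRpos hR1 hKdef hK2 hε'0 hε'K hη0 hη1 hηε hw hωn hω1 heη hδ0 hδ1
        hspos hsR hps hfr hp1V hp2V
      exact ⟨x, hxF, y, hyF, hxy, by linarith⟩
    · by_cases hc2 : ∀ θ' ∈ Set.Icc (0:ℝ) η, p * Complex.exp (((-θ':ℝ):ℂ)*Complex.I) ∈ V
      · set ω' := Complex.exp (((-η:ℝ):ℂ)*Complex.I) with hω'def
        have hω'n : ‖ω'‖ = 1 := norm_exp_I' (-η)
        have hω'1 : ω' ≠ 1 :=
          exp_I_ne_one (-η) (by intro h; exact hη0.ne' (by linarith [neg_eq_zero.1 h]))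
            (by rw [abs_neg, _root_.abs_of_pos hη0]; linarith)
        have he' : ‖(1:ℂ) - ω'‖ = e := by
          rw [hω'def, hedef, hωdef]
          exact norm_one_sub_exp_neg η
        have h10 := hc2 η ⟨hη0.le, le_refl _⟩
        have hp2V : ((s:ℝ):ℂ)*(w*ω') ∈ V := by
          have h11 : ((s:ℝ):ℂ)*(w*ω') = p * Complex.exp (((-η:ℝ):ℂ)*Complex.I) := by
            rw [hω'def, ← mul_assoc, ← hpw]
          rw [h11]; exact h10
        obtain ⟨x, hxF, y, hyF, hxy, hb⟩ := case_arc V hV hVb t R K ε' η δ s w ω'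
          ht0 ht1 hRpos hR1 hKdef hK2 hε'0 hε'K hη0 hη1 hηε hw hω'n hω'1
          (by rw [he']; exact heη) hδ0 (by rw [he']; exact hδ1)
          hspos hsR hps hfr hp1V hp2V
        exact ⟨x, hxF, y, hyF, hxy, by linarith⟩
      · push_neg at hc1 hc2
        obtain ⟨x, hxF, y, hyF, hxy, hb⟩ := case_exit V hV t R K ε' η δ s p
          ht0 ht1 hRpos hR1 hKdef hK2 hε'0 hε'K hη0 hη1 hηε hδ0 hδε
          hsdef hspos hsR hs1 hps hpV hc1 hc2
        exact ⟨x, hxF, y, hyF, hxy, by linarith⟩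
  linarith


theorem stmt12 :
    (∀ t ∈ Set.Icc (0:ℝ) 1, ∀ V : Set ℂ, IsOpen V → V ⊆ Metric.ball (0:ℂ) 1 →
      LipOn (ut t) V = LipOn (ut t) (frontier V)) ∧
    (∀ t₁ ∈ Set.Icc (0:ℝ) 1, ∀ t₂ ∈ Set.Icc (0:ℝ) 1, t₁ ≠ t₂ →
      (∀ z ∈ Metric.sphere (0:ℂ) 1, ut t₁ z = ut t₂ z) ∧
      ∃ z ∈ Metric.ball (0:ℂ) 1, ut t₁ z ≠ ut t₂ z) := by
  constructor
  · intro t ht V hV hVb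
    exact part1 t ht.1 ht.2 V hV hVb
  · intro t₁ _ t₂ _ hne
    constructor
    · intro z hz
      have hzn : ‖z‖ = 1 := mem_sphere_zero_iff_norm.1 hz
      have hz0 : z ≠ 0 := by
        intro h; rw [h, norm_zero] at hzn; norm_num at hzn
      rw [ut, ut, if_neg hz0, if_neg hz0, hzn]
      push_cast
      ring
    · refine ⟨(1/2 : ℂ), ?_, ?_⟩
      · rw [mem_ball_zero_iff]
        rw [show ((1/2:ℂ)) = (((1/2:ℝ)):ℂ) by norm_num, Complex.norm_real,
          Real.norm_of_nonneg (by norm_num)]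
        norm_num
      · intro h
        have hn : ‖(1/2:ℂ)‖ = 1/2 := by
          rw [show ((1/2:ℂ)) = (((1/2:ℝ)):ℂ) by norm_num, Complex.norm_real,
            Real.norm_of_nonneg (by norm_num)]
        have h0 : (1/2:ℂ) ≠ 0 := by norm_num
        rw [ut, ut, if_neg h0, if_neg h0, hn] at h
        push_cast at h
        apply hne
        have hC : (t₁:ℂ) = (t₂:ℂ) := by
          linear_combination (-4:ℂ) * h
        exact_mod_cast hC
end

section
/- Let f be analytic with f' ≠ 0 on a domain in ℂ. Writing g = Re f, one has Δ_∞ g ≥ 0 (equivalently Δ₁ g = Δg − Δ_∞g ≤ 0, since Δg = 0) if and only if Re[f''/(f')²] ≥ 0, where Δ_∞ g := |Dg|^{-2} g_{x_i} g_{x_j} g_{x_i x_j}. -/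
noncomputable def Emap : ℝ × ℝ →L[ℝ] ℂ :=
  Complex.ofRealCLM.comp (ContinuousLinearMap.fst ℝ ℝ ℝ) +
  Complex.I • (Complex.ofRealCLM.comp (ContinuousLinearMap.snd ℝ ℝ ℝ))

lemma Emap_apply (p : ℝ × ℝ) : Emap p = p.1 + p.2 * Complex.I := by
  simp [Emap, mul_comm]

/-- The real part of `f`, viewed as a function on `ℝ²`. -/
noncomputable def gR (f : ℂ → ℂ) : ℝ × ℝ → ℝ := fun p => (f (p.1 + p.2 * Complex.I)).re

/-- Partial derivative of `Re f` in the `x`-direction. -/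
noncomputable def gx (f : ℂ → ℂ) (p : ℝ × ℝ) : ℝ := fderiv ℝ (gR f) p (1, 0)

/-- Partial derivative of `Re f` in the `y`-direction. -/
noncomputable def gy (f : ℂ → ℂ) (p : ℝ × ℝ) : ℝ := fderiv ℝ (gR f) p (0, 1)

/-- The (normalized) infinity Laplacian
`Δ_∞ g = |Dg|⁻² (g_x² g_xx + 2 g_x g_y g_xy + g_y² g_yy)` of `g = Re f`. -/
noncomputable def infLap (f : ℂ → ℂ) (p : ℝ × ℝ) : ℝ :=
  ((gx f p)^2 * fderiv ℝ (gx f) p (1, 0) +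
    2 * gx f p * gy f p * fderiv ℝ (gx f) p (0, 1) +
    (gy f p)^2 * fderiv ℝ (gy f) p (0, 1)) / ((gx f p)^2 + (gy f p)^2)

lemma hasFDerivAt_gR (f : ℂ → ℂ) (p : ℝ × ℝ)
    (hf : DifferentiableAt ℂ f (p.1 + p.2 * Complex.I)) :
    HasFDerivAt (gR f)
      (Complex.reCLM.comp
        (((ContinuousLinearMap.smulRight (1 : ℂ →L[ℂ] ℂ)
           (deriv f (p.1 + p.2 * Complex.I))).restrictScalars ℝ).comp Emap)) p := by
  have h1 : HasFDerivAt (fun q : ℝ × ℝ => (q.1 : ℂ) + q.2 * Complex.I) Emap p := by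
    have he : (fun q : ℝ × ℝ => (q.1 : ℂ) + q.2 * Complex.I) = Emap := by
      funext q; rw [Emap_apply]
    rw [he]; exact Emap.hasFDerivAt
  have h2 := (hf.hasDerivAt.hasFDerivAt.restrictScalars ℝ).comp p h1
  exact Complex.reCLM.hasFDerivAt.comp p h2

lemma gx_eq (f : ℂ → ℂ) (p : ℝ × ℝ)
    (hf : DifferentiableAt ℂ f (p.1 + p.2 * Complex.I)) :
    gx f p = (deriv f (p.1 + p.2 * Complex.I)).re := by
  rw [gx, (hasFDerivAt_gR f p hf).fderiv]
  simp [Emap_apply]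

lemma gy_eq (f : ℂ → ℂ) (p : ℝ × ℝ)
    (hf : DifferentiableAt ℂ f (p.1 + p.2 * Complex.I)) :
    gy f p = -(deriv f (p.1 + p.2 * Complex.I)).im := by
  rw [gy, (hasFDerivAt_gR f p hf).fderiv]
  simp [Emap_apply]

lemma analyticAt_deriv (f : ℂ → ℂ) (z : ℂ) (h : AnalyticAt ℂ f z) :
    AnalyticAt ℂ (deriv f) z := by
  have h1 : AnalyticAt ℂ (fderiv ℂ f) z := h.fderiv
  have h2 := ((ContinuousLinearMap.apply ℂ ℂ (1:ℂ)).analyticAt (fderiv ℂ f z)).comp h1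
  apply h2.congr
  filter_upwards with w
  simp [Function.comp, ContinuousLinearMap.apply_apply, fderiv_apply_one_eq_deriv]

set_option maxHeartbeats 2000000 in
theorem stmt15 (U : Set ℂ) (hU : IsOpen U) (f : ℂ → ℂ)
    (hf : ∀ z ∈ U, AnalyticAt ℂ f z) (hf' : ∀ z ∈ U, deriv f z ≠ 0) :
    ∀ z ∈ U, (0 ≤ infLap f (z.re, z.im) ↔
      0 ≤ (deriv (deriv f) z / (deriv f z)^2).re) := by
  intro z hz
  set p : ℝ × ℝ := (z.re, z.im) with hp
  have hz' : (p.1 : ℂ) + p.2 * Complex.I = z := by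
    simp [hp, Complex.re_add_im]
  have hA : AnalyticAt ℂ f z := hf z hz
  -- eventual analyticity pulled back to ℝ²
  have hm : ContinuousAt (fun q : ℝ × ℝ => (q.1 : ℂ) + q.2 * Complex.I) p := by fun_prop
  have hev : ∀ᶠ q : ℝ × ℝ in nhds p, AnalyticAt ℂ f ((q.1 : ℂ) + q.2 * Complex.I) := by
    have := hA.eventually_analyticAt
    rw [← hz'] at this
    exact hm.eventually this
  -- first derivatives, as functions, eventually equal nice functions
  have hgx : gx f =ᶠ[nhds p] gR (deriv f) := by
    filter_upwards [hev] with q hq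
    rw [gx_eq f q hq.differentiableAt]; rfl
  have hgy : gy f =ᶠ[nhds p] gR (fun w => Complex.I * deriv f w) := by
    filter_upwards [hev] with q hq
    rw [gy_eq f q hq.differentiableAt]
    simp [gR]
  have hd2 : AnalyticAt ℂ (deriv f) z := analyticAt_deriv f z hA
  have hd2' : DifferentiableAt ℂ (deriv f) ((p.1 : ℂ) + p.2 * Complex.I) := by
    rw [hz']; exact hd2.differentiableAt
  have hd2I : DifferentiableAt ℂ (fun w => Complex.I * deriv f w) ((p.1 : ℂ) + p.2 * Complex.I) := by
    rw [hz']; exact hd2.differentiableAt.const_mul _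
  set c1 : ℂ := deriv f z with hc1
  set c2 : ℂ := deriv (deriv f) z with hc2
  -- values of first derivatives
  have v1 : gx f p = c1.re := by
    rw [gx_eq f p (by rw [hz']; exact hA.differentiableAt), hz']
  have v2 : gy f p = -c1.im := by
    rw [gy_eq f p (by rw [hz']; exact hA.differentiableAt), hz']
  -- second derivatives
  have e1 : fderiv ℝ (gx f) p = fderiv ℝ (gR (deriv f)) p := hgx.fderiv_eq
  have e2 : fderiv ℝ (gy f) p = fderiv ℝ (gR (fun w => Complex.I * deriv f w)) p := hgy.fderiv_eq
  have v3 : fderiv ℝ (gx f) p (1, 0) = c2.re := by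
    rw [e1, ← gx, gx_eq (deriv f) p hd2', hz']
  have v4 : fderiv ℝ (gx f) p (0, 1) = -c2.im := by
    rw [e1, ← gy, gy_eq (deriv f) p hd2', hz']
  have v5 : fderiv ℝ (gy f) p (0, 1) = -c2.re := by
    rw [e2, ← gy, gy_eq _ p hd2I, hz']
    rw [deriv_const_mul _ hd2.differentiableAt]
    simp [hc2]
  -- nonvanishing
  have hne : c1 ≠ 0 := hf' z hz
  have hD : (0:ℝ) < c1.re ^ 2 + c1.im ^ 2 := by
    have := Complex.normSq_pos.2 hne
    rw [Complex.normSq_apply] at this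
    nlinarith
  rw [infLap, v1, v2, v3, v4, v5]
  rw [Complex.div_re, ← add_div]
  have hre : (c1 ^ 2).re = c1.re * c1.re - c1.im * c1.im := by
    rw [pow_two, Complex.mul_re]
  have him : (c1 ^ 2).im = c1.re * c1.im + c1.im * c1.re := by
    rw [pow_two, Complex.mul_im]
  have hns : Complex.normSq (c1 ^ 2) = (c1.re ^ 2 + c1.im ^ 2) ^ 2 := by
    rw [map_pow, Complex.normSq_apply]; ring
  rw [hre, him, hns]
  have hD2 : (0:ℝ) < (c1.re ^ 2 + c1.im ^ 2) ^ 2 := by positivity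
  have hD' : (0:ℝ) < c1.re ^ 2 + (-c1.im) ^ 2 := by nlinarith
  rw [le_div_iff₀ hD', le_div_iff₀ hD2, zero_mul, zero_mul]
  constructor <;> intro h <;> nlinarith
end
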